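/- Let n ≥ 1 be an integer and let ζ be a fixed primitive n-th root of unity in the cyclotomic field ℚ(ζ_n). For each prime p dividing n let k_p denote the p-adic valuation of n. Then the element η = Π_{p ∣ n} ( Σ_{j=0}^{k_p − 1} ζ^{(n / p^{k_p}) · p^j} ), the product over the distinct prime divisors p of n of the sums of the elements ζ^{(n/p^{k_p})·p^j} for 0 ≤ j ≤ k_p − 1, is a normal basis generator of ℚ(ζ_n)/ℚ; i.e., the family (σ(η)) indexed by σ ∈ Gal(ℚ(ζ_n)/ℚ) is a basis of ℚ(ζ_n) as a ℚ-vector space. -/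

import Mathlib

open Finset
namespace NBaux

abbrev kk (N p : ℕ) : ℕ := N.factorization p
abbrev rr (N p : ℕ) : ℕ := N / p ^ kk N p

noncomputable def A {K : Type*} [Field K] (ζ : K) (p r k b l : ℕ) : K :=
  ∑ j ∈ Finset.Ico l k, ζ ^ (r * b * p ^ j)

noncomputable def F {K : Type*} [Field K] (N : ℕ) (ζ : K) (l : ℕ → ℕ) (b : ℕ) : K :=
  ∏ p ∈ N.primeFactors, A ζ p (rr N p) (kk N p) b (l p)

variable {K : Type*} [Field K]

lemma pow_congr {N : ℕ} {ζ : K} (h1 : ζ ^ N = 1) {a b : ℕ} (h : a ≡ b [MOD N]) :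
    ζ ^ a = ζ ^ b := by
  conv_lhs => rw [← Nat.div_add_mod a N]
  conv_rhs => rw [← Nat.div_add_mod b N]
  rw [pow_add, pow_add, pow_mul, pow_mul, h1, one_pow, one_pow, one_mul, one_mul]
  exact congrArg (ζ ^ ·) h

lemma pow_add_eq {N : ℕ} {ζ : K} (h1 : ζ ^ N = 1) {a b y : ℕ} (h : b = a + N * y) :
    ζ ^ b = ζ ^ a := by
  rw [h, pow_add, pow_mul, h1, one_pow, mul_one]

lemma A_congr {N : ℕ} {ζ : K} (h1 : ζ ^ N = 1) {p r k : ℕ} (hrq : r * p ^ k = N)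
    {b b' : ℕ} (h : b ≡ b' [MOD p ^ k]) (l : ℕ) :
    A ζ p r k b l = A ζ p r k b' l := by
  unfold A
  refine Finset.sum_congr rfl fun j _ => pow_congr h1 ?_
  have h2 := (Nat.ModEq.mul_left' (c := r) h).mul_right (p ^ j)
  rwa [hrq] at h2

lemma Astep {N p r b f g : ℕ} {ζ : K} (hN : 0 < N) (hζ : IsPrimitiveRoot ζ N) (hp : p.Prime)
    (hrq : r * p ^ (f + 2 + g) = N) (hbr : Nat.Coprime (b * r) p) :
    ∑ t ∈ Finset.range p, A ζ p r (f + 2 + g) (b * (1 + t * (p ^ (g + 1) * r))) f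
      = (p : K) * A ζ p r (f + 2 + g) b (f + 1) := by
  have h1 : ζ ^ N = 1 := hζ.pow_eq_one
  have hω : IsPrimitiveRoot (ζ ^ (r * p ^ (f + 1 + g))) p :=
    hζ.pow hN (by rw [← hrq]; ring)
  have hθ : IsPrimitiveRoot ((ζ ^ (r * p ^ (f + 1 + g))) ^ (b * r)) p :=
    hω.pow_of_coprime (b * r) hbr
  have hgeom := hθ.geom_sum_eq_zero hp.one_lt
  have step1 : ∀ t, A ζ p r (f + 2 + g) (b * (1 + t * (p ^ (g + 1) * r))) f
      = ζ ^ (r * b * p ^ f) * (((ζ ^ (r * p ^ (f + 1 + g))) ^ (b * r)) ^ t)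
        + A ζ p r (f + 2 + g) b (f + 1) := by
    intro t
    unfold A
    rw [Finset.sum_eq_sum_Ico_succ_bot (by omega : f < f + 2 + g)]
    congr 1
    · rw [← pow_mul, ← pow_mul, ← pow_add]
      exact congrArg (ζ ^ ·) (by ring)
    · refine Finset.sum_congr rfl fun j hj => ?_
      rw [Finset.mem_Ico] at hj
      obtain ⟨j', rfl⟩ : ∃ j', j = (f + 1) + j' := ⟨j - (f + 1), by omega⟩
      refine pow_add_eq h1 (y := b * t * r * p ^ j') ?_
      rw [← hrq]; ring
  rw [Finset.sum_congr rfl fun t _ => step1 t, Finset.sum_add_distrib, ← Finset.mul_sum,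
    hgeom, mul_zero, zero_add, Finset.sum_const, Finset.card_range, nsmul_eq_mul]

variable [Algebra ℚ K]

lemma claim1 (N : ℕ) (hN : N ≠ 0) (ζ : K) (hζ : IsPrimitiveRoot ζ N)
    (V : Submodule ℚ K)
    (hV : ∀ b : ℕ, b.Coprime N → F N ζ (fun _ => 0) b ∈ V) :
    ∀ (s : ℕ) (l : ℕ → ℕ), ∑ p ∈ N.primeFactors, l p = s →
      (∀ p ∈ N.primeFactors, l p + 1 ≤ kk N p) →
      ∀ b : ℕ, b.Coprime N → F N ζ l b ∈ V := by
  intro s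
  induction s using Nat.strong_induction_on with
  | _ s ih =>
  intro l hs hl b hb
  by_cases h0 : ∀ p ∈ N.primeFactors, l p = 0
  · have he : F N ζ l b = F N ζ (fun _ => 0) b :=
      Finset.prod_congr rfl fun p hp => by rw [h0 p hp]
    rw [he]; exact hV b hb
  push_neg at h0
  obtain ⟨p0, hp0P, hl0⟩ := h0
  have hp0 : p0.Prime := Nat.prime_of_mem_primeFactors hp0P
  have h1 : ζ ^ N = 1 := hζ.pow_eq_one
  obtain ⟨f, hf⟩ : ∃ f, l p0 = f + 1 := ⟨l p0 - 1, by omega⟩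
  obtain ⟨g, hg⟩ : ∃ g, kk N p0 = f + 2 + g := by
    have := hl p0 hp0P; exact ⟨kk N p0 - (f + 2), by omega⟩
  have hrq : rr N p0 * p0 ^ (f + 2 + g) = N := by
    rw [← hg]; exact Nat.div_mul_cancel (Nat.ordProj_dvd N p0)
  set c := p0 ^ (g + 1) * rr N p0 with hc
  have hrdvd : ∀ p ∈ N.primeFactors, p ≠ p0 → p ^ kk N p ∣ rr N p0 := by
    intro p hp hne
    have hpp := Nat.prime_of_mem_primeFactors hp
    have h2 : p ^ kk N p ∣ rr N p0 * p0 ^ (f + 2 + g) := by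
      rw [hrq]; exact Nat.ordProj_dvd N p
    exact (Nat.Coprime.pow _ _ ((Nat.coprime_primes hpp hp0).mpr hne)).dvd_of_dvd_mul_right h2
  have hcdvd : ∀ p ∈ N.primeFactors, p ∣ c := by
    intro p hp
    by_cases hpe : p = p0
    · subst hpe; exact Dvd.dvd.mul_right (dvd_pow_self p (Nat.succ_ne_zero g)) _
    · refine Dvd.dvd.mul_left (dvd_trans ?_ (hrdvd p hp hpe)) _
      exact dvd_pow_self p
        (Nat.Prime.factorization_pos_of_dvd (Nat.prime_of_mem_primeFactors hp) hN
          (Nat.dvd_of_mem_primeFactors hp)).ne'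
  have hu : ∀ t : ℕ, Nat.Coprime (1 + t * c) N := by
    intro t
    by_contra hcon
    obtain ⟨p, pp, hdu, hdN⟩ := Nat.Prime.not_coprime_iff_dvd.mp hcon
    have hpc : p ∣ t * c := Dvd.dvd.mul_left (hcdvd p (Nat.mem_primeFactors.mpr ⟨pp, hdN, hN⟩)) t
    have hone : p ∣ 1 := by
      have := Nat.dvd_sub hdu hpc
      simpa using this
    exact pp.ne_one (Nat.dvd_one.mp hone)
  set l' := Function.update l p0 f with hl'
  rw [← Finset.sum_erase_add _ _ hp0P] at hs
  have hsum' : ∑ p ∈ N.primeFactors, l' p = s - 1 := by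
    rw [← Finset.sum_erase_add _ _ hp0P]
    simp only [hl', Function.update_self]
    have he : ∑ p ∈ N.primeFactors.erase p0, Function.update l p0 f p
        = ∑ p ∈ N.primeFactors.erase p0, l p :=
      Finset.sum_congr rfl fun p hp => by
        rw [Function.update_of_ne (Finset.ne_of_mem_erase hp)]
    omega
  have hslt : s - 1 < s := by omega
  have hbr : Nat.Coprime (b * rr N p0) p0 :=
    Nat.Coprime.mul (Nat.Coprime.coprime_dvd_right (Nat.dvd_of_mem_primeFactors hp0P) hb)
      (Nat.coprime_ordCompl hp0 hN).symm
  have herase : ∀ bb : ℕ, bb ≡ b [MOD N] → True := fun _ _ => trivial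
  have key : ∑ t ∈ Finset.range p0, F N ζ l' (b * (1 + t * c)) = (p0 : K) * F N ζ l b := by
    have hsplit : ∀ t : ℕ, F N ζ l' (b * (1 + t * c))
        = A ζ p0 (rr N p0) (kk N p0) (b * (1 + t * c)) f
          * ∏ p ∈ N.primeFactors.erase p0, A ζ p (rr N p) (kk N p) b (l p) := by
      intro t
      rw [F, ← Finset.mul_prod_erase _ _ hp0P]
      simp only [hl', Function.update_self]
      congr 1
      refine Finset.prod_congr rfl fun p hp => ?_
      have hpP := Finset.mem_of_mem_erase hp
      have hpne := Finset.ne_of_mem_erase hp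
      rw [Function.update_of_ne hpne]
      refine A_congr h1 (Nat.div_mul_cancel (Nat.ordProj_dvd N p)) ?_ _
      have hdvd : p ^ kk N p ∣ b * (t * c) :=
        Dvd.dvd.mul_left (Dvd.dvd.mul_left
          (dvd_trans (hrdvd p hpP hpne) (Dvd.intro_left _ rfl)) t) b
      have hre : b * (1 + t * c) = b + b * (t * c) := by ring
      rw [hre]
      exact ((Nat.modEq_iff_dvd' (Nat.le_add_right b _)).mpr (by simpa using hdvd)).symm
    calc ∑ t ∈ Finset.range p0, F N ζ l' (b * (1 + t * c))
        = (∑ t ∈ Finset.range p0, A ζ p0 (rr N p0) (kk N p0) (b * (1 + t * c)) f)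
            * ∏ p ∈ N.primeFactors.erase p0, A ζ p (rr N p) (kk N p) b (l p) := by
          rw [Finset.sum_mul]
          exact Finset.sum_congr rfl fun t _ => hsplit t
      _ = ((p0 : K) * A ζ p0 (rr N p0) (kk N p0) b (f + 1))
            * ∏ p ∈ N.primeFactors.erase p0, A ζ p (rr N p) (kk N p) b (l p) := by
          rw [hg, Astep (Nat.pos_of_ne_zero hN) hζ hp0 hrq hbr]
      _ = (p0 : K) * F N ζ l b := by
          rw [F, ← Finset.mul_prod_erase _ _ hp0P, hf, mul_assoc]
  have hmem : ∀ t ∈ Finset.range p0, F N ζ l' (b * (1 + t * c)) ∈ V := by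
    intro t _
    refine ih (s - 1) hslt l' hsum' ?_ _ (Nat.Coprime.mul hb (hu t))
    intro p hp
    by_cases hpe : p = p0
    · subst hpe; simp only [hl', Function.update_self]; omega
    · simp only [hl', Function.update_of_ne hpe]; exact hl p hp
  have hVsum : ∑ t ∈ Finset.range p0, F N ζ l' (b * (1 + t * c)) ∈ V :=
    Submodule.sum_mem _ hmem
  rw [key] at hVsum
  have hre : F N ζ l b = ((p0 : ℚ)⁻¹) • ((p0 : K) * F N ζ l b) := by
    have hp0K : (p0 : K) = algebraMap ℚ K (p0 : ℚ) := by simp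
    rw [hp0K, ← Algebra.smul_def, smul_smul,
      inv_mul_cancel₀ (Nat.cast_ne_zero.mpr hp0.pos.ne'), one_smul]
  rw [hre]
  exact Submodule.smul_mem _ _ hVsum



lemma modEq_finset_prod {ι : Type*} {s : Finset ι} {f : ι → ℕ} {x y : ℕ}
    (hco : Set.Pairwise ↑s (Function.onFun Nat.Coprime f)) (h : ∀ i ∈ s, x ≡ y [MOD f i]) :
    x ≡ y [MOD ∏ i ∈ s, f i] := by
  classical
  induction s using Finset.cons_induction with
  | empty => simpa using Nat.modEq_one
  | cons i s his ih =>
    rw [Finset.prod_cons]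
    have hcop : Nat.Coprime (f i) (∏ j ∈ s, f j) :=
      Nat.Coprime.prod_right fun j hj =>
        hco (Finset.mem_coe.mpr (Finset.mem_cons_self i s))
          (Finset.mem_coe.mpr (Finset.mem_cons_of_mem hj)) (fun he => his (he ▸ hj))
    refine (Nat.modEq_and_modEq_iff_modEq_mul hcop).mp
      ⟨h i (Finset.mem_cons_self i s), ih (hco.mono ?_) fun j hj => h j (Finset.mem_cons_of_mem hj)⟩
    exact Finset.coe_subset.mpr (Finset.subset_cons his)

lemma pairwise_coprime_q (N : ℕ) :
    Set.Pairwise ↑N.primeFactors (Function.onFun Nat.Coprime fun p => p ^ kk N p) := by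
  intro x hx y hy hxy
  exact Nat.Coprime.pow _ _
    ((Nat.coprime_primes (Nat.prime_of_mem_primeFactors hx)
      (Nat.prime_of_mem_primeFactors hy)).mpr hxy)

lemma modEq_N {N : ℕ} (hN : N ≠ 0) {x y : ℕ}
    (h : ∀ p ∈ N.primeFactors, x ≡ y [MOD p ^ kk N p]) : x ≡ y [MOD N] := by
  have hNe : N = ∏ p ∈ N.primeFactors, p ^ kk N p := by
    conv_lhs => rw [← Nat.factorization_prod_pow_eq_self hN]
    rfl
  rw [hNe]
  exact modEq_finset_prod (pairwise_coprime_q N) h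

lemma exists_B (N : ℕ) (hN : N ≠ 0) (p0 : ℕ) (hp0P : p0 ∈ N.primeFactors) (a b : ℕ)
    (ha : Nat.Coprime a p0) (hb : Nat.Coprime b N) :
    ∃ B : ℕ, B.Coprime N ∧ B ≡ a [MOD p0 ^ kk N p0] ∧
      ∀ p ∈ N.primeFactors, p ≠ p0 → B ≡ b [MOD p ^ kk N p] := by
  classical
  set cfun : ℕ → ℕ := fun p => if p = p0 then a else b with hcfun
  have hs : ∀ p ∈ N.primeFactors, (fun p => p ^ kk N p) p ≠ 0 := fun p hp =>
    pow_ne_zero _ (Nat.prime_of_mem_primeFactors hp).pos.ne'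
  obtain ⟨B, hB⟩ := Nat.chineseRemainderOfFinset cfun (fun p => p ^ kk N p)
    N.primeFactors hs (pairwise_coprime_q N)
  have hkpos : ∀ p ∈ N.primeFactors, kk N p ≠ 0 := fun p hp =>
    (Nat.Prime.factorization_pos_of_dvd (Nat.prime_of_mem_primeFactors hp) hN
      (Nat.dvd_of_mem_primeFactors hp)).ne'
  refine ⟨B, ?_, ?_, ?_⟩
  · by_contra hcon
    obtain ⟨p, pp, hdB, hdN⟩ := Nat.Prime.not_coprime_iff_dvd.mp hcon
    have hpP : p ∈ N.primeFactors := Nat.mem_primeFactors.mpr ⟨pp, hdN, hN⟩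
    have h2 : B ≡ cfun p [MOD p] :=
      Nat.ModEq.of_dvd (dvd_pow_self p (hkpos p hpP)) (hB p hpP)
    have h3 : p ∣ cfun p := (Nat.modEq_zero_iff_dvd).mp
      (h2.symm.trans ((Nat.modEq_zero_iff_dvd).mpr hdB))
    by_cases hpe : p = p0
    · rw [hcfun] at h3; simp only [hpe, if_pos rfl] at h3
      subst hpe
      exact (Nat.Prime.coprime_iff_not_dvd pp).mp (Nat.coprime_comm.mp ha) h3
    · rw [hcfun] at h3; simp only [if_neg hpe] at h3
      exact (Nat.Prime.coprime_iff_not_dvd pp).mp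
        (Nat.coprime_comm.mp (Nat.Coprime.coprime_dvd_right hdN hb)) h3
  · have := hB p0 hp0P
    simpa [hcfun] using this
  · intro p hp hpne
    have := hB p hp
    simpa [hcfun, if_neg hpne] using this


lemma claim2 (N : ℕ) (hN : N ≠ 0) (ζ : K) (hζ : IsPrimitiveRoot ζ N)
    (V : Submodule ℚ K)
    (hV : ∀ b : ℕ, b.Coprime N → F N ζ (fun _ => 0) b ∈ V) :
    ∀ (T : Finset ℕ), T ⊆ N.primeFactors → ∀ (m l : ℕ → ℕ),
      (∀ p ∈ N.primeFactors, l p + 1 ≤ kk N p) → ∀ b : ℕ, b.Coprime N →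
      (∏ p ∈ T, ζ ^ (rr N p * m p))
        * ∏ p ∈ N.primeFactors \ T, A ζ p (rr N p) (kk N p) b (l p) ∈ V := by
  classical
  intro T
  induction T using Finset.induction_on with
  | empty =>
    intro _ m l hl b hb
    rw [Finset.prod_empty, one_mul, Finset.sdiff_empty]
    exact claim1 N hN ζ hζ V hV _ l rfl hl b hb
  | @insert p0 T' hp0T' ihT =>
    intro hsub m l hl b hb
    have hp0P : p0 ∈ N.primeFactors := hsub (Finset.mem_insert_self _ _)
    have hT'sub : T' ⊆ N.primeFactors := (Finset.subset_insert _ _).trans hsub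
    have hp0 : p0.Prime := Nat.prime_of_mem_primeFactors hp0P
    have h1 : ζ ^ N = 1 := hζ.pow_eq_one
    have hNpos : 0 < N := Nat.pos_of_ne_zero hN
    have hrqp0 : rr N p0 * p0 ^ kk N p0 = N := Nat.div_mul_cancel (Nat.ordProj_dvd N p0)
    have hk0pos : 1 ≤ kk N p0 :=
      Nat.Prime.factorization_pos_of_dvd hp0 hN (Nat.dvd_of_mem_primeFactors hp0P)
    have hporg : insert p0 (N.primeFactors \ insert p0 T') = N.primeFactors \ T' := by
      rw [Finset.sdiff_insert, Finset.insert_erase (Finset.mem_sdiff.mpr ⟨hp0P, hp0T'⟩)]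
    have hp0nm : p0 ∉ N.primeFactors \ insert p0 T' := fun h =>
      (Finset.mem_sdiff.mp h).2 (Finset.mem_insert_self _ _)
    rw [Finset.prod_insert hp0T']
    set X := ∏ p ∈ T', ζ ^ (rr N p * m p) with hXdef
    set Y := ∏ p ∈ N.primeFactors \ insert p0 T', A ζ p (rr N p) (kk N p) b (l p) with hYdef
    -- the key: any single power times X * Y is in V
    have hAv : ∀ a v : ℕ, Nat.Coprime a p0 → v + 1 ≤ kk N p0 →
        ζ ^ (rr N p0 * a * p0 ^ v) * (X * Y) ∈ V := by
      intro a v ha hv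
      obtain ⟨B, hBcop, hBa, hBb⟩ := exists_B N hN p0 hp0P a b ha hb
      obtain ⟨eg, hek⟩ : ∃ eg, kk N p0 = v + (eg + 1) := ⟨kk N p0 - v - 1, by omega⟩
      have hzB : ζ ^ (rr N p0 * a * p0 ^ v) = ζ ^ (rr N p0 * B * p0 ^ v) := by
        refine pow_congr h1 ?_
        have h2 := Nat.ModEq.mul_left' (c := rr N p0 * p0 ^ v)
          (Nat.ModEq.of_dvd (pow_dvd_pow p0 (show eg + 1 ≤ kk N p0 by omega)) hBa.symm)
        have hNe : rr N p0 * p0 ^ v * p0 ^ (eg + 1) = N := by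
          rw [mul_assoc, ← pow_add, ← hek]; exact hrqp0
        rw [hNe] at h2
        have e1 : rr N p0 * a * p0 ^ v = rr N p0 * p0 ^ v * a := by ring
        have e2 : rr N p0 * B * p0 ^ v = rr N p0 * p0 ^ v * B := by ring
        rw [e1, e2]; exact h2
      have hYB : Y = ∏ p ∈ N.primeFactors \ insert p0 T', A ζ p (rr N p) (kk N p) B (l p) := by
        rw [hYdef]
        refine Finset.prod_congr rfl fun p hp => ?_
        obtain ⟨hpP, hpni⟩ := Finset.mem_sdiff.mp hp
        have hpne : p ≠ p0 := fun h => hpni (h ▸ Finset.mem_insert_self _ _)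
        exact A_congr h1 (Nat.div_mul_cancel (Nat.ordProj_dvd N p)) (hBb p hpP hpne).symm _
      have hIH : ∀ w, w + 1 ≤ kk N p0 →
          X * (A ζ p0 (rr N p0) (kk N p0) B w
            * ∏ p ∈ N.primeFactors \ insert p0 T', A ζ p (rr N p) (kk N p) B (l p)) ∈ V := by
        intro w hw
        have hbound : ∀ p ∈ N.primeFactors, Function.update l p0 w p + 1 ≤ kk N p := by
          intro p hp
          by_cases hpe : p = p0
          · subst hpe; rw [Function.update_self]; omega
          · rw [Function.update_of_ne hpe]; exact hl p hp
        have hmem := ihT hT'sub m (Function.update l p0 w) hbound B hBcop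
        rw [← hporg, Finset.prod_insert hp0nm, Function.update_self] at hmem
        have hrest : ∏ p ∈ N.primeFactors \ insert p0 T',
            A ζ p (rr N p) (kk N p) B (Function.update l p0 w p)
            = ∏ p ∈ N.primeFactors \ insert p0 T', A ζ p (rr N p) (kk N p) B (l p) := by
          refine Finset.prod_congr rfl fun p hp => ?_
          have hpne : p ≠ p0 := fun h => (Finset.mem_sdiff.mp hp).2
            (h ▸ Finset.mem_insert_self _ _)
          rw [Function.update_of_ne hpne]
        rwa [hrest] at hmem
      have hsplitA : ζ ^ (rr N p0 * B * p0 ^ v)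
          = A ζ p0 (rr N p0) (kk N p0) B v - A ζ p0 (rr N p0) (kk N p0) B (v + 1) := by
        refine eq_sub_of_add_eq ?_
        unfold A
        rw [Finset.sum_eq_sum_Ico_succ_bot (show v < kk N p0 by omega)]
      rw [hzB, hsplitA, sub_mul]
      refine sub_mem ?_ ?_
      · have hm := hIH v hv
        rw [hYB, show A ζ p0 (rr N p0) (kk N p0) B v
            * (X * ∏ p ∈ N.primeFactors \ insert p0 T', A ζ p (rr N p) (kk N p) B (l p))
          = X * (A ζ p0 (rr N p0) (kk N p0) B v
            * ∏ p ∈ N.primeFactors \ insert p0 T', A ζ p (rr N p) (kk N p) B (l p)) from by ring]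
        exact hm
      · by_cases hvt : v + 1 = kk N p0
        · have hA0 : A ζ p0 (rr N p0) (kk N p0) B (v + 1) = 0 := by
            unfold A; rw [hvt, Finset.Ico_self, Finset.sum_empty]
          rw [hA0, zero_mul]; exact zero_mem _
        · have hm := hIH (v + 1) (by omega)
          rw [hYB, show A ζ p0 (rr N p0) (kk N p0) B (v + 1)
              * (X * ∏ p ∈ N.primeFactors \ insert p0 T', A ζ p (rr N p) (kk N p) B (l p))
            = X * (A ζ p0 (rr N p0) (kk N p0) B (v + 1)
              * ∏ p ∈ N.primeFactors \ insert p0 T', A ζ p (rr N p) (kk N p) B (l p)) from by ring]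
          exact hm
    -- now case on m p0 % p0 ^ kk N p0
    obtain ⟨k', hk'⟩ : ∃ k', kk N p0 = k' + 1 := ⟨kk N p0 - 1, by omega⟩
    by_cases hm0 : m p0 % p0 ^ kk N p0 = 0
    · -- the p0 factor is 1
      have hz : ζ ^ (rr N p0 * m p0) = 1 := by
        obtain ⟨w, hw⟩ := Nat.dvd_of_mod_eq_zero hm0
        rw [hw, ← mul_assoc, hrqp0, pow_mul, h1, one_pow]
      rw [hz, one_mul]
      -- 1 = - ∑_{t ∈ Ico 1 p0} ω^t
      have hω : IsPrimitiveRoot (ζ ^ (rr N p0 * p0 ^ k')) p0 :=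
        hζ.pow hNpos (by rw [mul_assoc, ← pow_succ, ← hk']; exact hrqp0.symm)
      have hgeom := hω.geom_sum_eq_zero hp0.one_lt
      rw [Finset.range_eq_Ico, Finset.sum_eq_sum_Ico_succ_bot hp0.pos, pow_zero] at hgeom
      have hone : (1 : K) = - ∑ t ∈ Finset.Ico 1 p0, (ζ ^ (rr N p0 * p0 ^ k')) ^ t :=
        eq_neg_of_add_eq_zero_left hgeom
      rw [show X * Y = 1 * (X * Y) from (one_mul _).symm, hone, neg_mul, Finset.sum_mul]
      refine neg_mem (Submodule.sum_mem _ fun t ht => ?_)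
      rw [Finset.mem_Ico] at ht
      have hta : Nat.Coprime t p0 := Nat.coprime_comm.mp
        ((Nat.Prime.coprime_iff_not_dvd hp0).mpr (Nat.not_dvd_of_pos_of_lt ht.1 ht.2))
      have he : (ζ ^ (rr N p0 * p0 ^ k')) ^ t = ζ ^ (rr N p0 * t * p0 ^ k') := by
        rw [← pow_mul]; exact congrArg (ζ ^ ·) (by ring)
      rw [he]
      exact hAv t k' hta (by omega)
    · -- nonzero residue
      set m0 := m p0 % p0 ^ kk N p0 with hm0def
      have hq0pos : 0 < p0 ^ kk N p0 := pow_pos hp0.pos _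
      have hmlt : m0 < p0 ^ kk N p0 := Nat.mod_lt _ hq0pos
      set e := m0.factorization p0 with hedef
      set a := m0 / p0 ^ e with hadef
      have hpe_dvd : p0 ^ e ∣ m0 := Nat.ordProj_dvd m0 p0
      have ha : Nat.Coprime a p0 := (Nat.coprime_ordCompl hp0 hm0).symm
      have heq : p0 ^ e * a = m0 := Nat.ordProj_mul_ordCompl_eq_self m0 p0
      have helt : e + 1 ≤ kk N p0 := by
        have hle : p0 ^ e ≤ m0 := Nat.le_of_dvd (Nat.pos_of_ne_zero hm0) hpe_dvd
        have := lt_of_le_of_lt hle hmlt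
        exact (Nat.pow_lt_pow_iff_right hp0.one_lt).mp this
      have hz : ζ ^ (rr N p0 * m p0) = ζ ^ (rr N p0 * a * p0 ^ e) := by
        have hstep1 : ζ ^ (rr N p0 * m p0) = ζ ^ (rr N p0 * m0) := by
          refine pow_congr h1 ?_
          have h2 := Nat.ModEq.mul_left' (c := rr N p0) (Nat.mod_modEq (m p0) (p0 ^ kk N p0)).symm
          rwa [hrqp0] at h2
        rw [hstep1, ← heq]
        exact congrArg (ζ ^ ·) (by ring)
      rw [mul_assoc, hz]
      exact hAv a e ha helt

lemma qdvd_rr {N : ℕ} {p q : ℕ} (hp : p ∈ N.primeFactors) (hq : q ∈ N.primeFactors)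
    (hne : p ≠ q) : p ^ kk N p ∣ rr N q := by
  have hpp := Nat.prime_of_mem_primeFactors hp
  have hqp := Nat.prime_of_mem_primeFactors hq
  have h2 : p ^ kk N p ∣ rr N q * q ^ kk N q := by
    rw [Nat.div_mul_cancel (Nat.ordProj_dvd N q)]
    exact Nat.ordProj_dvd N p
  exact (Nat.Coprime.pow _ _ ((Nat.coprime_primes hpp hqp).mpr hne)).dvd_of_dvd_mul_right h2

lemma zeta_pow_mem (N : ℕ) (hN : N ≠ 0) (ζ : K) (hζ : IsPrimitiveRoot ζ N)
    (V : Submodule ℚ K)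
    (hV : ∀ b : ℕ, b.Coprime N → F N ζ (fun _ => 0) b ∈ V) (i : ℕ) :
    ζ ^ i ∈ V := by
  classical
  have h1 : ζ ^ N = 1 := hζ.pow_eq_one
  have hinv : ∀ p, ∃ sp, p ∈ N.primeFactors → rr N p * sp ≡ 1 [MOD p ^ kk N p] := by
    intro p
    by_cases hp : p ∈ N.primeFactors
    · have hpp := Nat.prime_of_mem_primeFactors hp
      have hkpos : kk N p ≠ 0 :=
        (Nat.Prime.factorization_pos_of_dvd hpp hN (Nat.dvd_of_mem_primeFactors hp)).ne'
      have hq1 : 1 < p ^ kk N p := Nat.one_lt_pow hkpos hpp.one_lt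
      have hco : Nat.Coprime (rr N p) (p ^ kk N p) :=
        Nat.Coprime.pow_right _ (Nat.coprime_ordCompl hpp hN).symm
      obtain ⟨sp, -, hsp⟩ := Nat.exists_mul_mod_eq_one_of_coprime hco hq1
      exact ⟨sp, fun _ => by
        show (rr N p * sp) % (p ^ kk N p) = 1 % (p ^ kk N p)
        rw [hsp, Nat.one_mod_eq_one.mpr hq1.ne']⟩
    · exact ⟨0, fun h => absurd h hp⟩
  choose sfun hsfun using hinv
  set m : ℕ → ℕ := fun p => sfun p * i with hm
  have hxcong : ∀ p ∈ N.primeFactors,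
      (∑ p' ∈ N.primeFactors, rr N p' * m p') ≡ i [MOD p ^ kk N p] := by
    intro p hp
    rw [← Finset.add_sum_erase _ _ hp]
    have hrest : (∑ p' ∈ N.primeFactors.erase p, rr N p' * m p') ≡ 0 [MOD p ^ kk N p] := by
      refine (Nat.modEq_zero_iff_dvd).mpr (Finset.dvd_sum fun q hq => ?_)
      exact Dvd.dvd.mul_right
        (qdvd_rr hp (Finset.mem_of_mem_erase hq) (Finset.ne_of_mem_erase hq).symm) _
    have hmain : rr N p * m p ≡ i [MOD p ^ kk N p] := by
      have h2 := (hsfun p hp).mul_right i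
      rw [one_mul] at h2
      have he : rr N p * m p = rr N p * sfun p * i := by rw [hm]; ring
      rw [he]; exact h2
    have := hmain.add hrest
    rwa [add_zero] at this
  have hcong : (∑ p' ∈ N.primeFactors, rr N p' * m p') ≡ i [MOD N] := modEq_N hN hxcong
  have hz : ζ ^ i = ∏ p ∈ N.primeFactors, ζ ^ (rr N p * m p) := by
    rw [Finset.prod_pow_eq_pow_sum]
    exact pow_congr h1 hcong.symm
  rw [hz]
  have := claim2 N hN ζ hζ V hV N.primeFactors (le_refl _) m (fun _ => 0)
    (fun p hp => Nat.Prime.factorization_pos_of_dvd (Nat.prime_of_mem_primeFactors hp) hN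
      (Nat.dvd_of_mem_primeFactors hp)) 1 (Nat.coprime_one_left N)
  rwa [Finset.sdiff_self, Finset.prod_empty, mul_one] at this

lemma top_le_span (n : ℕ+) (ζ : CyclotomicField n ℚ) (hζ : IsPrimitiveRoot ζ (n : ℕ)) :
    ⊤ ≤ Submodule.span ℚ (Set.range fun σ : (CyclotomicField n ℚ) ≃ₐ[ℚ] (CyclotomicField n ℚ) =>
      σ (∏ p ∈ (n : ℕ).primeFactors, ∑ j ∈ Finset.range ((n : ℕ).factorization p),
        ζ ^ (((n : ℕ) / p ^ ((n : ℕ).factorization p)) * p ^ j))) := by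
  classical
  have hN : (n : ℕ) ≠ 0 := n.pos.ne'
  haveI : NeZero (n : ℕ) := ⟨hN⟩
  haveI : IsCyclotomicExtension {(n : ℕ)} ℚ (CyclotomicField n ℚ) :=
    CyclotomicField.isCyclotomicExtension _ _
  have irr : Irreducible (Polynomial.cyclotomic (n : ℕ) ℚ) :=
    Polynomial.cyclotomic.irreducible_rat n.pos
  haveI : NeZero ((n : ℕ) : ℚ) := ⟨Nat.cast_ne_zero.mpr hN⟩
  set η : CyclotomicField n ℚ := ∏ p ∈ (n : ℕ).primeFactors, ∑ j ∈ Finset.range ((n : ℕ).factorization p),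
    ζ ^ (((n : ℕ) / p ^ ((n : ℕ).factorization p)) * p ^ j) with hη
  set V : Submodule ℚ (CyclotomicField n ℚ) := Submodule.span ℚ
    (Set.range fun σ : (CyclotomicField n ℚ) ≃ₐ[ℚ] (CyclotomicField n ℚ) => σ η) with hV
  have h1 : ζ ^ (n : ℕ) = 1 := hζ.pow_eq_one
  have hVmem : ∀ b : ℕ, b.Coprime (n : ℕ) → F (n : ℕ) ζ (fun _ => 0) b ∈ V := by
    intro b hb
    have hζb : IsPrimitiveRoot (ζ ^ b) (n : ℕ) := hζ.pow_of_coprime b hb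
    have hmin : minpoly ℚ (hζ.powerBasis ℚ).gen = minpoly ℚ (hζb.powerBasis ℚ).gen := by
      rw [hζ.powerBasis_gen ℚ, hζb.powerBasis_gen ℚ,
        ← hζ.minpoly_eq_cyclotomic_of_irreducible irr,
        ← hζb.minpoly_eq_cyclotomic_of_irreducible irr]
    set σ : (CyclotomicField n ℚ) ≃ₐ[ℚ] (CyclotomicField n ℚ) :=
      (hζ.powerBasis ℚ).equivOfMinpoly (hζb.powerBasis ℚ) hmin with hσdef
    have hσ : σ ζ = ζ ^ b := by
      have := (hζ.powerBasis ℚ).equivOfMinpoly_gen (hζb.powerBasis ℚ) hmin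
      rwa [hζ.powerBasis_gen ℚ, hζb.powerBasis_gen ℚ] at this
    have hFη : F (n : ℕ) ζ (fun _ => 0) b = σ η := by
      rw [hη, map_prod]
      refine Finset.prod_congr rfl fun p hp => ?_
      rw [map_sum]
      unfold A
      rw [← Finset.range_eq_Ico]
      refine Finset.sum_congr rfl fun j hj => ?_
      rw [map_pow, hσ, ← pow_mul]
      exact congrArg (ζ ^ ·) (by ring)
    rw [hFη]
    exact Submodule.subset_span ⟨σ, rfl⟩
  have hpow : ∀ i : ℕ, ζ ^ i ∈ V := fun i => zeta_pow_mem (n : ℕ) hN ζ hζ V hVmem i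
  rw [← (hζ.powerBasis ℚ).basis.span_eq]
  refine Submodule.span_le.mpr ?_
  rintro y ⟨i, rfl⟩
  rw [(hζ.powerBasis ℚ).coe_basis, hζ.powerBasis_gen ℚ]
  exact hpow _

end NBaux



/-- `x` is a normal basis generator of a field `K` over `ℚ`:
the family `(σ x)` indexed by `σ ∈ Gal(K/ℚ)` is a `ℚ`-basis of `K`. -/
def IsNormalBasisGenerator (K : Type*) [Field K] [Algebra ℚ K] (x : K) : Prop :=
  ∃ B : Module.Basis (K ≃ₐ[ℚ] K) ℚ K, ∀ σ : K ≃ₐ[ℚ] K, B σ = σ x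

theorem stmt_12 (n : ℕ+) (ζ : CyclotomicField n ℚ) (hζ : IsPrimitiveRoot ζ (n : ℕ)) :
    IsNormalBasisGenerator (CyclotomicField n ℚ)
      (∏ p ∈ (n : ℕ).primeFactors,
        ∑ j ∈ Finset.range ((n : ℕ).factorization p),
          ζ ^ (((n : ℕ) / p ^ ((n : ℕ).factorization p)) * p ^ j)) := by
  classical
  have hspan := NBaux.top_le_span n ζ hζ
  haveI : NeZero (n : ℕ) := ⟨n.pos.ne'⟩
  haveI : IsCyclotomicExtension {(n : ℕ)} ℚ (CyclotomicField n ℚ) :=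
    CyclotomicField.isCyclotomicExtension _ _
  haveI := IsCyclotomicExtension.isGalois {(n : ℕ)} ℚ (CyclotomicField n ℚ)
  haveI : FiniteDimensional ℚ (CyclotomicField n ℚ) :=
    IsCyclotomicExtension.finiteDimensional {(n : ℕ)} ℚ (CyclotomicField n ℚ)
  have hcard : Fintype.card ((CyclotomicField n ℚ) ≃ₐ[ℚ] (CyclotomicField n ℚ))
      = Module.finrank ℚ (CyclotomicField n ℚ) := by
    rw [← Nat.card_eq_fintype_card]; exact IsGalois.card_aut_eq_finrank ℚ _
  exact ⟨basisOfTopLeSpanOfCardEqFinrank _ hspan hcard,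
    fun σ => congrFun (coe_basisOfTopLeSpanOfCardEqFinrank _ hspan hcard) σ⟩
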